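/- For every h ∈ H₁, writing h = h₂w₂ + h₃w₃ with h₂, h₃ ∈ [0,1), the coordinates h₂ and h₃ belong to the set {0, 1/μ₁, 2/μ₁, …, (μ₁−1)/μ₁}, and every element of this set is the w₂-coordinate (respectively the w₃-coordinate) of exactly one point of H₁. Moreover, there exists a unique ξ₁ ∈ {0, 1, …, μ₁−1} with gcd(ξ₁, μ₁) = 1 such that the μ₁ points of H₁ are exactly (i/μ₁)·w₂ + {iξ₁/μ₁}·w₃ for i = 0, 1, …, μ₁−1. -/

import Mathlib

noncomputable section

/-- The coercion of an integer vector in `ℤ³` to `ℝ³`. -/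
def coe3 (v : Fin 3 → ℤ) : Fin 3 → ℝ := fun i => (v i : ℝ)

/-- A vector of `ℤ³` is primitive if the greatest common divisor of its components is 1. -/
def IsPrimitive (v : Fin 3 → ℤ) : Prop := Int.gcd (v 0) (Int.gcd (v 1) (v 2)) = 1

/-- The fundamental parallelepiped spanned by two vectors:
`◊(a,b) = {s•a + t•b : s,t ∈ [0,1)}`. -/
def para2 (a b : Fin 3 → ℝ) : Set (Fin 3 → ℝ) :=
  {x | ∃ s t : ℝ, 0 ≤ s ∧ s < 1 ∧ 0 ≤ t ∧ t < 1 ∧ x = s • a + t • b}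

/-- The fundamental parallelepiped spanned by three vectors:
`◊(a,b,c) = {s•a + t•b + u•c : s,t,u ∈ [0,1)}`. -/
def para3 (a b c : Fin 3 → ℝ) : Set (Fin 3 → ℝ) :=
  {x | ∃ s t u : ℝ, 0 ≤ s ∧ s < 1 ∧ 0 ≤ t ∧ t < 1 ∧ 0 ≤ u ∧ u < 1 ∧
    x = s • a + t • b + u • c}

/-- The integral points `ℤ³ ∩ ◊(a,b)` of a two-dimensional fundamental parallelepiped. -/
def H2pts (a b : Fin 3 → ℤ) : Set (Fin 3 → ℤ) := {x | coe3 x ∈ para2 (coe3 a) (coe3 b)}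

/-- The integral points `ℤ³ ∩ ◊(a,b,c)` of a three-dimensional fundamental parallelepiped. -/
def H3pts (a b c : Fin 3 → ℤ) : Set (Fin 3 → ℤ) :=
  {x | coe3 x ∈ para3 (coe3 a) (coe3 b) (coe3 c)}

lemma coe3_inj : Function.Injective coe3 := by
  intro a b h
  funext i
  have := congrFun h i
  simpa [coe3] using this

lemma coe3_add (a b : Fin 3 → ℤ) : coe3 (a + b) = coe3 a + coe3 b := by
  funext i; simp [coe3]

lemma coe3_sub (a b : Fin 3 → ℤ) : coe3 (a - b) = coe3 a - coe3 b := by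
  funext i; simp [coe3]

lemma coe3_zsmul (m : ℤ) (a : Fin 3 → ℤ) : coe3 (m • a) = (m : ℝ) • coe3 a := by
  funext i; simp [coe3]

lemma coe3_zero : coe3 0 = 0 := by funext i; simp [coe3]

/-- Bezout-type consequence of primitivity. -/
lemma prim_int (w : Fin 3 → ℤ) (hp : IsPrimitive w) (r : ℝ) (v : Fin 3 → ℤ)
    (h : coe3 v = r • coe3 w) : ∃ m : ℤ, r = (m : ℝ) := by
  -- get x y z with x*w0 + y*w1 + z*w2 = 1
  obtain ⟨x, y, z, hxyz⟩ : ∃ x y z : ℤ, x * w 0 + y * w 1 + z * w 2 = 1 := by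
    set G : ℤ := (Int.gcd (w 1) (w 2) : ℤ) with hG
    have h1 : G = w 1 * Int.gcdA (w 1) (w 2) + w 2 * Int.gcdB (w 1) (w 2) :=
      Int.gcd_eq_gcd_ab _ _
    have h0 : (Int.gcd (w 0) G : ℤ) = w 0 * Int.gcdA (w 0) G + G * Int.gcdB (w 0) G :=
      Int.gcd_eq_gcd_ab _ _
    have hp' : (Int.gcd (w 0) G : ℤ) = 1 := by exact_mod_cast hp
    refine ⟨Int.gcdA (w 0) G,
      Int.gcdA (w 1) (w 2) * Int.gcdB (w 0) G,
      Int.gcdB (w 1) (w 2) * Int.gcdB (w 0) G, ?_⟩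
    rw [hp'] at h0
    linear_combination -h0 - Int.gcdB (w 0) G * h1
  refine ⟨x * v 0 + y * v 1 + z * v 2, ?_⟩
  have e0 := congrFun h 0
  have e1 := congrFun h 1
  have e2 := congrFun h 2
  simp [coe3] at e0 e1 e2
  have hr : r * ((x : ℝ) * w 0 + y * w 1 + z * w 2) = (x : ℝ) * v 0 + y * v 1 + z * v 2 := by
    rw [e0, e1, e2]; ring
  have hone : ((x : ℝ) * w 0 + y * w 1 + z * w 2) = 1 := by exact_mod_cast congrArg (Int.cast : ℤ → ℝ) hxyz
  rw [hone, mul_one] at hr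
  rw [hr]
  push_cast
  ring

lemma fract_fract_add (a b : ℝ) : Int.fract (Int.fract a + b) = Int.fract (a + b) := by
  have : Int.fract a + b = (a + b) + ((-⌊a⌋ : ℤ) : ℝ) := by
    rw [Int.fract]; push_cast; ring
  rw [this, Int.fract_add_intCast]

/-- For every `h ∈ H₁ = ℤ³ ∩ ◊(w₂,w₃)`, writing `h = h₂w₂ + h₃w₃` with
`h₂, h₃ ∈ [0,1)`, the coordinates `h₂`, `h₃` belong to `{0, 1/μ₁, …, (μ₁−1)/μ₁}`, and every
element of this set is the `w₂`-coordinate (resp. the `w₃`-coordinate) of exactly one point of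
`H₁`.  Moreover, there is a unique `ξ₁ ∈ {0,…,μ₁−1}` with `gcd(ξ₁, μ₁) = 1` such that the `μ₁`
points of `H₁` are exactly `(i/μ₁)·w₂ + {iξ₁/μ₁}·w₃` for `i = 0, …, μ₁−1`. -/
theorem description_of_H1 (w₁ w₂ w₃ : Fin 3 → ℤ)
    (hnn₁ : ∀ i, 0 ≤ w₁ i) (hnn₂ : ∀ i, 0 ≤ w₂ i) (hnn₃ : ∀ i, 0 ≤ w₃ i)
    (hp₁ : IsPrimitive w₁) (hp₂ : IsPrimitive w₂) (hp₃ : IsPrimitive w₃)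
    (hli : LinearIndependent ℝ ![coe3 w₁, coe3 w₂, coe3 w₃])
    (μ₁ : ℕ) (hμ₁ : μ₁ = (H2pts w₂ w₃).ncard) :
    (∀ h ∈ H2pts w₂ w₃, ∀ h₂ h₃ : ℝ,
      coe3 h = h₂ • coe3 w₂ + h₃ • coe3 w₃ →
      (∃ k : ℕ, k < μ₁ ∧ h₂ = (k : ℝ) / (μ₁ : ℝ)) ∧
      (∃ k : ℕ, k < μ₁ ∧ h₃ = (k : ℝ) / (μ₁ : ℝ))) ∧
    (∀ k : ℕ, k < μ₁ →
      ∃! h : Fin 3 → ℤ, h ∈ H2pts w₂ w₃ ∧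
        ∃ h₃ : ℝ, coe3 h = ((k : ℝ) / (μ₁ : ℝ)) • coe3 w₂ + h₃ • coe3 w₃) ∧
    (∀ k : ℕ, k < μ₁ →
      ∃! h : Fin 3 → ℤ, h ∈ H2pts w₂ w₃ ∧
        ∃ h₂ : ℝ, coe3 h = h₂ • coe3 w₂ + ((k : ℝ) / (μ₁ : ℝ)) • coe3 w₃) ∧
    (∃! ξ₁ : ℕ, ξ₁ < μ₁ ∧ Nat.gcd ξ₁ μ₁ = 1 ∧
      H2pts w₂ w₃ = {h : Fin 3 → ℤ | ∃ i : ℕ, i < μ₁ ∧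
        coe3 h = ((i : ℝ) / (μ₁ : ℝ)) • coe3 w₂ +
          Int.fract (((i * ξ₁ : ℕ) : ℝ) / (μ₁ : ℝ)) • coe3 w₃}) := by
  classical
  -- zero is in H
  have hzero : (0 : Fin 3 → ℤ) ∈ H2pts w₂ w₃ := by
    refine ⟨0, 0, le_refl _, zero_lt_one, le_refl _, zero_lt_one, ?_⟩
    funext i; simp [coe3]
  -- finiteness
  have hfin : (H2pts w₂ w₃).Finite := by
    apply Set.Finite.subset (Set.finite_Icc (0 : Fin 3 → ℤ) (w₂ + w₃))
    rintro x ⟨s, t, hs0, hs1, ht0, ht1, hx⟩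
    constructor
    · intro i
      have := congrFun hx i
      simp [coe3] at this
      have h2 := hnn₂ i; have h3 := hnn₃ i
      have : (0 : ℝ) ≤ (x i : ℝ) := by
        rw [this]
        have : (0:ℝ) ≤ (w₂ i : ℝ) := by exact_mod_cast h2
        have : (0:ℝ) ≤ (w₃ i : ℝ) := by exact_mod_cast h3
        positivity
      exact_mod_cast this
    · intro i
      have hxi := congrFun hx i
      simp [coe3] at hxi
      have h2 : (0:ℝ) ≤ (w₂ i : ℝ) := by exact_mod_cast hnn₂ i
      have h3 : (0:ℝ) ≤ (w₃ i : ℝ) := by exact_mod_cast hnn₃ i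
      have : (x i : ℝ) ≤ (w₂ i : ℝ) + (w₃ i : ℝ) := by
        rw [hxi]
        nlinarith
      have : (x i : ℝ) ≤ ((w₂ + w₃) i : ℝ) := by push_cast [Pi.add_apply]; linarith
      exact_mod_cast this
  have hpos : 0 < μ₁ := by
    rw [hμ₁]
    exact (Set.ncard_pos hfin).mpr ⟨0, hzero⟩
  -- linear independence of the pair: unique coordinates
  have uniq0 : ∀ s t : ℝ, s • coe3 w₂ + t • coe3 w₃ = 0 → s = 0 ∧ t = 0 := by
    intro s t hst
    have := Fintype.linearIndependent_iff.mp hli ![0, s, t] ?_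
    · exact ⟨this 1, this 2⟩
    · rw [Fin.sum_univ_three]
      simpa using hst
  have uniq : ∀ s t s' t' : ℝ, s • coe3 w₂ + t • coe3 w₃ = s' • coe3 w₂ + t' • coe3 w₃ →
      s = s' ∧ t = t' := by
    intro s t s' t' h
    have h' : (s - s') • coe3 w₂ + (t - t') • coe3 w₃ = 0 := by
      rw [sub_smul, sub_smul]
      rw [show (s • coe3 w₂ - s' • coe3 w₂) + (t • coe3 w₃ - t' • coe3 w₃)
        = (s • coe3 w₂ + t • coe3 w₃) - (s' • coe3 w₂ + t' • coe3 w₃) by abel, h]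
      simp
    obtain ⟨e1, e2⟩ := uniq0 _ _ h'
    constructor <;> linarith [sub_eq_zero.mp e1, sub_eq_zero.mp e2]
  -- coordinate functions
  have exC : ∀ h : Fin 3 → ℤ, ∃ s t : ℝ, h ∈ H2pts w₂ w₃ →
      0 ≤ s ∧ s < 1 ∧ 0 ≤ t ∧ t < 1 ∧ coe3 h = s • coe3 w₂ + t • coe3 w₃ := by
    intro h
    by_cases hh : h ∈ H2pts w₂ w₃
    · obtain ⟨s, t, h1, h2, h3, h4, h5⟩ := hh
      exact ⟨s, t, fun _ => ⟨h1, h2, h3, h4, h5⟩⟩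
    · exact ⟨0, 0, fun hmem => absurd hmem hh⟩
  choose c2 c3 hC using exC
  have cmem : ∀ h ∈ H2pts w₂ w₃, 0 ≤ c2 h ∧ c2 h < 1 ∧ 0 ≤ c3 h ∧ c3 h < 1 :=
    fun h hh => ⟨(hC h hh).1, (hC h hh).2.1, (hC h hh).2.2.1, (hC h hh).2.2.2.1⟩
  have ceq : ∀ h ∈ H2pts w₂ w₃, coe3 h = c2 h • coe3 w₂ + c3 h • coe3 w₃ :=
    fun h hh => (hC h hh).2.2.2.2
  have cu : ∀ h ∈ H2pts w₂ w₃, ∀ s t : ℝ, coe3 h = s • coe3 w₂ + t • coe3 w₃ →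
      s = c2 h ∧ t = c3 h := by
    intro h hh s t hst
    exact uniq s t (c2 h) (c3 h) (hst ▸ ceq h hh)
  have c2zero : c2 0 = 0 ∧ c3 0 = 0 := by
    have := cu 0 hzero 0 0 (by rw [coe3_zero]; simp)
    exact ⟨this.1.symm, this.2.symm⟩
  -- joint injectivity
  have injC : ∀ x ∈ H2pts w₂ w₃, ∀ y ∈ H2pts w₂ w₃, c2 x = c2 y → c3 x = c3 y → x = y := by
    intro x hx y hy h2 h3
    apply coe3_inj
    rw [ceq x hx, ceq y hy, h2, h3]
  -- c2-injectivity (uses primitivity of w₃)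
  have inj2 : ∀ x ∈ H2pts w₂ w₃, ∀ y ∈ H2pts w₂ w₃, c2 x = c2 y → x = y := by
    intro x hx y hy h2
    have hdiff : coe3 (x - y) = (c3 x - c3 y) • coe3 w₃ := by
      rw [coe3_sub, ceq x hx, ceq y hy, h2]
      funext i
      simp [Pi.add_apply, Pi.sub_apply, sub_smul]
      ring
    obtain ⟨m, hm⟩ := prim_int w₃ hp₃ _ _ hdiff
    obtain ⟨x0, x1, hx2, hx3⟩ := cmem x hx
    obtain ⟨y0, y1, hy2, hy3⟩ := cmem y hy
    have hm0 : m = 0 := by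
      have h1 : (m : ℝ) < 1 := by rw [← hm]; linarith
      have h2' : (-1 : ℝ) < m := by rw [← hm]; linarith
      have : m < 1 := by exact_mod_cast h1
      have : -1 < m := by exact_mod_cast h2'
      omega
    have : c3 x = c3 y := by
      have := hm; rw [hm0] at this; push_cast at this; linarith
    exact injC x hx y hy h2 this
  -- c3-injectivity (uses primitivity of w₂)
  have inj3 : ∀ x ∈ H2pts w₂ w₃, ∀ y ∈ H2pts w₂ w₃, c3 x = c3 y → x = y := by
    intro x hx y hy h3
    have hdiff : coe3 (x - y) = (c2 x - c2 y) • coe3 w₂ := by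
      rw [coe3_sub, ceq x hx, ceq y hy, h3]
      funext i
      simp [Pi.add_apply, Pi.sub_apply, sub_smul]
      ring
    obtain ⟨m, hm⟩ := prim_int w₂ hp₂ _ _ hdiff
    obtain ⟨x0, x1, hx2, hx3⟩ := cmem x hx
    obtain ⟨y0, y1, hy2, hy3⟩ := cmem y hy
    have hm0 : m = 0 := by
      have h1 : (m : ℝ) < 1 := by rw [← hm]; linarith
      have h2' : (-1 : ℝ) < m := by rw [← hm]; linarith
      have : m < 1 := by exact_mod_cast h1
      have : -1 < m := by exact_mod_cast h2'
      omega
    have : c2 x = c2 y := by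
      have := hm; rw [hm0] at this; push_cast at this; linarith
    exact injC x hx y hy this h3
  -- addition modulo the lattice
  have addEx : ∀ x g : Fin 3 → ℤ, ∃ y : Fin 3 → ℤ, x ∈ H2pts w₂ w₃ → g ∈ H2pts w₂ w₃ →
      (y ∈ H2pts w₂ w₃ ∧ c2 y = Int.fract (c2 x + c2 g) ∧ c3 y = Int.fract (c3 x + c3 g)) := by
    intro x g
    refine ⟨x + g - (⌊c2 x + c2 g⌋ • w₂ + ⌊c3 x + c3 g⌋ • w₃), fun hx hg => ?_⟩
    set y := x + g - (⌊c2 x + c2 g⌋ • w₂ + ⌊c3 x + c3 g⌋ • w₃) with hy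
    have hcoe : coe3 y = Int.fract (c2 x + c2 g) • coe3 w₂ + Int.fract (c3 x + c3 g) • coe3 w₃ := by
      rw [hy, coe3_sub, coe3_add, coe3_add, coe3_zsmul, coe3_zsmul, ceq x hx, ceq g hg]
      funext i
      simp only [Pi.add_apply, Pi.sub_apply, Pi.smul_apply, smul_eq_mul, Int.fract]
      ring
    have hmem : y ∈ H2pts w₂ w₃ :=
      ⟨Int.fract (c2 x + c2 g), Int.fract (c3 x + c3 g), Int.fract_nonneg _,
        Int.fract_lt_one _, Int.fract_nonneg _, Int.fract_lt_one _, hcoe⟩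
    obtain ⟨e1, e2⟩ := cu y hmem _ _ hcoe
    exact ⟨hmem, e1.symm, e2.symm⟩
  choose add hadd using addEx
  set F := hfin.toFinset with hF
  have hmemF : ∀ x, x ∈ F ↔ x ∈ H2pts w₂ w₃ := fun x => hfin.mem_toFinset
  have hcard : F.card = μ₁ := by rw [hμ₁, Set.ncard_eq_toFinset_card _ hfin]
  -- the averaging argument: μ₁ • (coordinates) are integers
  have shift : ∀ g ∈ H2pts w₂ w₃,
      (∃ m : ℤ, (μ₁ : ℝ) * c2 g = m) ∧ (∃ m : ℤ, (μ₁ : ℝ) * c3 g = m) := by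
    intro g hg
    set φ := fun x => add x g with hφ
    have hφinj : ∀ x ∈ F, ∀ y ∈ F, φ x = φ y → x = y := by
      intro x hx y hy hxy
      have hx' := (hmemF x).mp hx
      have hy' := (hmemF y).mp hy
      obtain ⟨hm1, h21, h31⟩ := hadd x g hx' hg
      obtain ⟨hm2, h22, h32⟩ := hadd y g hy' hg
      have e2 : Int.fract (c2 x + c2 g) = Int.fract (c2 y + c2 g) := by
        rw [← h21, ← h22, hφ] at *
        rw [show add x g = add y g from hxy]
      have e3 : Int.fract (c3 x + c3 g) = Int.fract (c3 y + c3 g) := by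
        rw [← h31, ← h32]
        rw [show add x g = add y g from hxy]
      obtain ⟨z2, hz2⟩ := Int.fract_eq_fract.mp e2
      obtain ⟨z3, hz3⟩ := Int.fract_eq_fract.mp e3
      obtain ⟨a1, a2, a3, a4⟩ := cmem x hx'
      obtain ⟨b1, b2, b3, b4⟩ := cmem y hy'
      have hz2' : (z2 : ℝ) = c2 x - c2 y := by linarith
      have hz3' : (z3 : ℝ) = c3 x - c3 y := by linarith
      have : z2 = 0 := by
        have l1 : (z2 : ℝ) < 1 := by rw [hz2']; linarith
        have l2 : (-1 : ℝ) < z2 := by rw [hz2']; linarith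
        have : z2 < 1 := by exact_mod_cast l1
        have : -1 < z2 := by exact_mod_cast l2
        omega
      have h2xy : c2 x = c2 y := by rw [this] at hz2'; push_cast at hz2'; linarith
      have : z3 = 0 := by
        have l1 : (z3 : ℝ) < 1 := by rw [hz3']; linarith
        have l2 : (-1 : ℝ) < z3 := by rw [hz3']; linarith
        have : z3 < 1 := by exact_mod_cast l1
        have : -1 < z3 := by exact_mod_cast l2
        omega
      have h3xy : c3 x = c3 y := by rw [this] at hz3'; push_cast at hz3'; linarith
      exact injC x hx' y hy' h2xy h3xy
    have hφmem : ∀ x ∈ F, φ x ∈ F := by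
      intro x hx
      exact (hmemF _).mpr (hadd x g ((hmemF x).mp hx) hg).1
    have himg : F.image φ = F := by
      apply Finset.eq_of_subset_of_card_le
      · intro y hy
        obtain ⟨x, hx, rfl⟩ := Finset.mem_image.mp hy
        exact hφmem x hx
      · rw [Finset.card_image_of_injOn hφinj]
    constructor
    · refine ⟨∑ x ∈ F, ⌊c2 x + c2 g⌋, ?_⟩
      have hsum : ∑ x ∈ F, c2 (φ x) = ∑ x ∈ F, c2 x := by
        rw [← Finset.sum_image hφinj, himg]
      have hfl : ∀ x ∈ F, c2 (φ x) = c2 x + c2 g - (⌊c2 x + c2 g⌋ : ℝ) := by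
        intro x hx
        rw [(hadd x g ((hmemF x).mp hx) hg).2.1, Int.fract]
      rw [Finset.sum_congr rfl hfl] at hsum
      rw [Finset.sum_sub_distrib, Finset.sum_add_distrib, Finset.sum_const, nsmul_eq_mul] at hsum
      push_cast
      rw [← hcard]
      linarith [hsum]
    · refine ⟨∑ x ∈ F, ⌊c3 x + c3 g⌋, ?_⟩
      have hsum : ∑ x ∈ F, c3 (φ x) = ∑ x ∈ F, c3 x := by
        rw [← Finset.sum_image hφinj, himg]
      have hfl : ∀ x ∈ F, c3 (φ x) = c3 x + c3 g - (⌊c3 x + c3 g⌋ : ℝ) := by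
        intro x hx
        rw [(hadd x g ((hmemF x).mp hx) hg).2.2, Int.fract]
      rw [Finset.sum_congr rfl hfl] at hsum
      rw [Finset.sum_sub_distrib, Finset.sum_add_distrib, Finset.sum_const, nsmul_eq_mul] at hsum
      push_cast
      rw [← hcard]
      linarith [hsum]
  have hμne : (μ₁ : ℝ) ≠ 0 := by positivity
  -- every coordinate is k/μ₁
  have coordVal2 : ∀ h ∈ H2pts w₂ w₃, ∃ k : ℕ, k < μ₁ ∧ c2 h = (k : ℝ) / μ₁ := by
    intro h hh
    obtain ⟨m, hm⟩ := (shift h hh).1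
    obtain ⟨a1, a2, a3, a4⟩ := cmem h hh
    have hm0 : 0 ≤ m := by
      have : (0 : ℝ) ≤ m := by rw [← hm]; positivity
      exact_mod_cast this
    have hmlt : m < μ₁ := by
      have : (m : ℝ) < μ₁ := by
        rw [← hm]
        have : (μ₁:ℝ) * c2 h < μ₁ * 1 := by
          apply mul_lt_mul_of_pos_left a2
          positivity
        linarith
      exact_mod_cast this
    refine ⟨m.toNat, ?_, ?_⟩
    · omega
    · rw [eq_div_iff hμne]
      rw [show ((m.toNat : ℕ) : ℝ) = (m : ℝ) by exact_mod_cast Int.toNat_of_nonneg hm0]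
      linarith [hm]
  have coordVal3 : ∀ h ∈ H2pts w₂ w₃, ∃ k : ℕ, k < μ₁ ∧ c3 h = (k : ℝ) / μ₁ := by
    intro h hh
    obtain ⟨m, hm⟩ := (shift h hh).2
    obtain ⟨a1, a2, a3, a4⟩ := cmem h hh
    have hm0 : 0 ≤ m := by
      have : (0 : ℝ) ≤ m := by rw [← hm]; positivity
      exact_mod_cast this
    have hmlt : m < μ₁ := by
      have : (m : ℝ) < μ₁ := by
        rw [← hm]
        have : (μ₁:ℝ) * c3 h < μ₁ * 1 := by
          apply mul_lt_mul_of_pos_left a4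
          positivity
        linarith
      exact_mod_cast this
    refine ⟨m.toNat, ?_, ?_⟩
    · omega
    · rw [eq_div_iff hμne]
      rw [show ((m.toNat : ℕ) : ℝ) = (m : ℝ) by exact_mod_cast Int.toNat_of_nonneg hm0]
      linarith [hm]
  -- surjectivity of coordinates
  have divinj : ∀ a ∈ Finset.range μ₁, ∀ b ∈ Finset.range μ₁,
      (a : ℝ) / μ₁ = (b : ℝ) / μ₁ → a = b := by
    intro a _ b _ hab
    have : (a : ℝ) = b := by
      field_simp at hab
      exact_mod_cast hab
    exact_mod_cast this
  have surj2 : ∀ k : ℕ, k < μ₁ → ∃ h ∈ H2pts w₂ w₃, c2 h = (k : ℝ) / μ₁ := by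
    intro k hk
    have hsub : F.image c2 ⊆ (Finset.range μ₁).image (fun j : ℕ => (j : ℝ) / μ₁) := by
      intro v hv
      obtain ⟨x, hx, rfl⟩ := Finset.mem_image.mp hv
      obtain ⟨j, hj, hje⟩ := coordVal2 x ((hmemF x).mp hx)
      exact Finset.mem_image.mpr ⟨j, Finset.mem_range.mpr hj, hje.symm⟩
    have hcards : ((Finset.range μ₁).image (fun j : ℕ => (j : ℝ) / μ₁)).card ≤ (F.image c2).card := by
      rw [Finset.card_image_of_injOn divinj, Finset.card_range,
        Finset.card_image_of_injOn (fun x hx y hy hxy => inj2 x ((hmemF x).mp hx) y ((hmemF y).mp hy) hxy),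
        hcard]
    have heq := Finset.eq_of_subset_of_card_le hsub hcards
    have : (k : ℝ) / μ₁ ∈ F.image c2 := by
      rw [heq]
      exact Finset.mem_image.mpr ⟨k, Finset.mem_range.mpr hk, rfl⟩
    obtain ⟨h, hh, hhe⟩ := Finset.mem_image.mp this
    exact ⟨h, (hmemF h).mp hh, hhe⟩
  have surj3 : ∀ k : ℕ, k < μ₁ → ∃ h ∈ H2pts w₂ w₃, c3 h = (k : ℝ) / μ₁ := by
    intro k hk
    have hsub : F.image c3 ⊆ (Finset.range μ₁).image (fun j : ℕ => (j : ℝ) / μ₁) := by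
      intro v hv
      obtain ⟨x, hx, rfl⟩ := Finset.mem_image.mp hv
      obtain ⟨j, hj, hje⟩ := coordVal3 x ((hmemF x).mp hx)
      exact Finset.mem_image.mpr ⟨j, Finset.mem_range.mpr hj, hje.symm⟩
    have hcards : ((Finset.range μ₁).image (fun j : ℕ => (j : ℝ) / μ₁)).card ≤ (F.image c3).card := by
      rw [Finset.card_image_of_injOn divinj, Finset.card_range,
        Finset.card_image_of_injOn (fun x hx y hy hxy => inj3 x ((hmemF x).mp hx) y ((hmemF y).mp hy) hxy),
        hcard]
    have heq := Finset.eq_of_subset_of_card_le hsub hcards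
    have : (k : ℝ) / μ₁ ∈ F.image c3 := by
      rw [heq]
      exact Finset.mem_image.mpr ⟨k, Finset.mem_range.mpr hk, rfl⟩
    obtain ⟨h, hh, hhe⟩ := Finset.mem_image.mp this
    exact ⟨h, (hmemF h).mp hh, hhe⟩
  refine ⟨?_, ?_, ?_, ?_⟩
  · -- Part 1
    intro h hh h₂ h₃ heq
    obtain ⟨e2, e3⟩ := cu h hh h₂ h₃ heq
    exact ⟨e2 ▸ coordVal2 h hh, e3 ▸ coordVal3 h hh⟩
  · -- Part 2
    intro k hk
    obtain ⟨h, hh, hc⟩ := surj2 k hk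
    refine ⟨h, ⟨hh, c3 h, by rw [ceq h hh, hc]⟩, ?_⟩
    rintro y ⟨hy, t, hyt⟩
    have := (cu y hy _ _ hyt).1
    exact inj2 y hy h hh (by rw [← this, hc])
  · -- Part 3
    intro k hk
    obtain ⟨h, hh, hc⟩ := surj3 k hk
    refine ⟨h, ⟨hh, c2 h, by rw [ceq h hh, hc]⟩, ?_⟩
    rintro y ⟨hy, t, hyt⟩
    have := (cu y hy _ _ hyt).2
    exact inj3 y hy h hh (by rw [← this, hc])
  · -- Part 4
    by_cases hone : μ₁ = 1
    · -- trivial case μ₁ = 1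
      subst hone
      refine ⟨0, ⟨by omega, by simp, ?_⟩, ?_⟩
      · ext h
        simp only [Set.mem_setOf_eq]
        constructor
        · intro hh
          obtain ⟨k, hk, hc2⟩ := coordVal2 h hh
          obtain ⟨k', hk', hc3⟩ := coordVal3 h hh
          interval_cases k
          interval_cases k'
          refine ⟨0, by omega, ?_⟩
          rw [ceq h hh, hc2, hc3]
          norm_num
        · rintro ⟨i, hi, hcoe⟩
          interval_cases i
          have : coe3 h = coe3 0 := by
            rw [hcoe, coe3_zero]
            norm_num
          rw [coe3_inj this]
          exact hzero
      · rintro ξ' ⟨hξ', -, -⟩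
        omega
    · -- main case μ₁ ≥ 2
      have h2le : 2 ≤ μ₁ := by omega
      obtain ⟨g, hg, hgc2⟩ := surj2 1 (by omega)
      obtain ⟨ξ₁, hξlt, hgc3⟩ := coordVal3 g hg
      have fr_self : ∀ i : ℕ, i < μ₁ → Int.fract ((i : ℝ) / μ₁) = (i : ℝ) / μ₁ := by
        intro i hi
        apply Int.fract_eq_self.mpr
        constructor
        · positivity
        · rw [div_lt_one (by positivity)]
          exact_mod_cast hi
      have iter : ∀ i : ℕ, ∃ h : Fin 3 → ℤ, h ∈ H2pts w₂ w₃ ∧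
          c2 h = Int.fract ((i : ℝ) / μ₁) ∧
          c3 h = Int.fract (((i * ξ₁ : ℕ) : ℝ) / μ₁) := by
        intro i
        induction i with
        | zero =>
          refine ⟨0, hzero, ?_, ?_⟩
          · rw [c2zero.1]; norm_num
          · rw [c2zero.2]; norm_num
        | succ i ih =>
          obtain ⟨h, hh, e2, e3⟩ := ih
          obtain ⟨hmem', f2, f3⟩ := hadd h g hh hg
          refine ⟨add h g, hmem', ?_, ?_⟩
          · rw [f2, e2, hgc2, fract_fract_add]
            congr 1
            push_cast
            ring
          · rw [f3, e3, hgc3, fract_fract_add]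
            congr 1
            push_cast
            ring
      choose pt hptmem hpt2 hpt3 using iter
      refine ⟨ξ₁, ⟨hξlt, ?_, ?_⟩, ?_⟩
      · -- gcd (ξ₁, μ₁) = 1
        by_contra hne
        set d := Nat.gcd ξ₁ μ₁ with hd
        have hd1 : d ∣ μ₁ := Nat.gcd_dvd_right _ _
        have hd2 : d ∣ ξ₁ := Nat.gcd_dvd_left _ _
        have hdpos : 0 < d := Nat.gcd_pos_of_pos_right _ hpos
        have hd2le : 2 ≤ d := by omega
        set i := μ₁ / d with hi
        have hipos : 0 < i := Nat.div_pos (Nat.le_of_dvd hpos hd1) hdpos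
        have hilt : i < μ₁ := Nat.div_lt_self hpos (by omega)
        obtain ⟨e, he⟩ := hd2
        have hieq : i * ξ₁ = μ₁ * e := by
          have h1 : μ₁ / d * d = μ₁ := Nat.div_mul_cancel hd1
          calc i * ξ₁ = μ₁ / d * (d * e) := by rw [hi, he]
            _ = (μ₁ / d * d) * e := by ring
            _ = μ₁ * e := by rw [h1]
        have hc3i : c3 (pt i) = 0 := by
          rw [hpt3 i, hieq]
          push_cast
          rw [mul_div_cancel_left₀ _ hμne]
          exact Int.fract_natCast e
        have hc30 : c3 (pt 0) = 0 := by
          rw [hpt3 0]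
          norm_num
        have hpteq : pt i = pt 0 := inj3 _ (hptmem i) _ (hptmem 0) (by rw [hc3i, hc30])
        have hc2i : c2 (pt i) = (i : ℝ) / μ₁ := by rw [hpt2 i, fr_self i hilt]
        have hc20 : c2 (pt 0) = 0 := by rw [hpt2 0]; norm_num
        rw [hpteq, hc20] at hc2i
        have : i = 0 := by
          field_simp at hc2i
          have hc2i' := hc2i.symm
          simp at hc2i'
          exact_mod_cast hc2i'
        omega
      · -- the set description
        ext h
        simp only [Set.mem_setOf_eq]
        constructor
        · intro hh
          obtain ⟨k, hk, hc⟩ := coordVal2 h hh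
          have hhk : h = pt k := by
            apply inj2 h hh (pt k) (hptmem k)
            rw [hc, hpt2 k, fr_self k hk]
          refine ⟨k, hk, ?_⟩
          rw [hhk, ceq (pt k) (hptmem k), hpt2 k, fr_self k hk, hpt3 k]
        · rintro ⟨i, hi, hcoe⟩
          have : coe3 h = coe3 (pt i) := by
            rw [hcoe, ceq (pt i) (hptmem i), hpt2 i, fr_self i hi, hpt3 i]
          rw [coe3_inj this]
          exact hptmem i
      · -- uniqueness of ξ₁
        rintro ξ' ⟨hξ'lt, hgcd', hset'⟩
        have hgmem : g ∈ {h : Fin 3 → ℤ | ∃ i : ℕ, i < μ₁ ∧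
            coe3 h = ((i : ℝ) / (μ₁ : ℝ)) • coe3 w₂ +
              Int.fract (((i * ξ' : ℕ) : ℝ) / (μ₁ : ℝ)) • coe3 w₃} := by
          rw [← hset']; exact hg
        obtain ⟨i, hi, hcoe⟩ := hgmem
        obtain ⟨u2, u3⟩ := cu g hg _ _ hcoe
        rw [hgc2] at u2
        have hieq : i = 1 := by
          field_simp at u2
          exact_mod_cast u2
        subst hieq
        rw [hgc3] at u3
        rw [one_mul] at u3
        rw [Int.fract_eq_self.mpr ⟨by positivity, by
          rw [div_lt_one (by positivity)]; exact_mod_cast hξ'lt⟩] at u3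
        field_simp at u3
        exact_mod_cast u3

end
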